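/- Let n be a natural number, let A be an n×n complex Hermitian matrix, and let λ : ℕ → ℝ be a sequence with ∑_k λ_k² < ∞. Then the family of complex numbers k ↦ exp(-i·λ_k·tr A) · (det(1 - i·λ_k·A))⁻¹ is multipliable, i.e. the infinite product ∏_{k=0}^∞ exp(-i·λ_k·tr A)·(det(1 - i·λ_k·A))⁻¹ converges. -/

import Mathlib

open Matrix

lemma aux_mult (lam : ℕ → ℝ) (hlam : Summable (fun k => lam k ^ 2)) (μ : ℝ) :
    Multipliable (fun k : ℕ =>
      Complex.exp (-Complex.I * (lam k : ℂ) * (μ : ℂ)) *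
        (1 - Complex.I * (lam k : ℂ) * (μ : ℂ))⁻¹) := by
  set f : ℕ → ℂ := fun k =>
    Complex.exp (-Complex.I * (lam k : ℂ) * (μ : ℂ)) *
      (1 - Complex.I * (lam k : ℂ) * (μ : ℂ))⁻¹ with hf
  have hne : ∀ k, (1 : ℂ) - Complex.I * (lam k : ℂ) * (μ : ℂ) ≠ 0 := by
    intro k h
    have := congrArg Complex.re h
    simp [Complex.sub_re] at this
  have hfne : ∀ k, f k ≠ 0 := fun k =>
    mul_ne_zero (Complex.exp_ne_zero _) (inv_ne_zero (hne k))
  have key : Summable (fun k => Complex.log (f k)) := by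
    apply Summable.of_norm_bounded_eventually (g := fun k => (3/2) * (μ^2 * lam k ^ 2))
      (((hlam.mul_left (μ^2)).mul_left (3/2)))
    rw [Nat.cofinite_eq_atTop]
    have h0 : Filter.Tendsto (fun k => lam k ^ 2) Filter.atTop (nhds 0) :=
      hlam.tendsto_atTop_zero
    have h1 : ∀ᶠ k in Filter.atTop, lam k ^ 2 ≤ 1 / (4 * (μ^2 + 1)) := by
      have := h0.eventually_le_const (show (0:ℝ) < 1 / (4 * (μ^2 + 1)) by positivity)
      exact this
    filter_upwards [h1] with k hk
    set x : ℝ := lam k * μ with hx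
    have hx2 : x ^ 2 ≤ 1/4 := by
      have h2 : (0:ℝ) < μ^2 + 1 := by positivity
      have := mul_le_mul_of_nonneg_right hk (sq_nonneg μ)
      rw [hx, mul_pow]
      rw [div_mul_eq_mul_div, one_mul] at this
      calc lam k ^2 * μ^2 ≤ μ^2 / (4 * (μ^2+1)) := this
        _ ≤ 1/4 := by rw [div_le_div_iff₀ (by positivity) (by norm_num)]; nlinarith
    have hxabs : |x| ≤ 1/2 := by
      nlinarith [abs_nonneg x, sq_abs x]
    -- main estimate
    have hterm : (1 : ℂ) - Complex.I * (lam k : ℂ) * (μ : ℂ) = 1 - Complex.I * (x:ℂ) := by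
      push_cast [hx]; ring
    have hnormIx : ‖(-(Complex.I * (x:ℂ)))‖ = |x| := by
      simp [norm_mul]
    have hden : (1:ℝ) ≤ ‖(1 - Complex.I * (x:ℂ))‖ := by
      have : (1 - Complex.I * (x:ℂ)).re = 1 := by simp
      calc (1:ℝ) = |(1 - Complex.I * (x:ℂ)).re| := by rw [this]; norm_num
        _ ≤ ‖(1 - Complex.I * (x:ℂ))‖ := Complex.abs_re_le_norm _
    have hdenne : (1:ℂ) - Complex.I * (x:ℂ) ≠ 0 := by
      intro h; rw [h] at hden; simp at hden; linarith
    have hnum : ‖(Complex.exp (-(Complex.I * (x:ℂ))) - (1 - Complex.I * (x:ℂ)))‖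
        ≤ x ^ 2 := by
      have h1 : ‖(-(Complex.I * (x:ℂ)))‖ ≤ 1 := by
        rw [hnormIx]; linarith
      have := Complex.norm_exp_sub_one_sub_id_le h1
      rw [hnormIx] at this
      calc ‖(Complex.exp (-(Complex.I * (x:ℂ))) - (1 - Complex.I * (x:ℂ)))‖
          = ‖(Complex.exp (-(Complex.I * (x:ℂ))) - 1 - (-(Complex.I * (x:ℂ))))‖ := by
            ring_nf
        _ ≤ |x| ^ 2 := this
        _ = x ^ 2 := sq_abs x
    have hfk : f k = Complex.exp (-(Complex.I * (x:ℂ))) * (1 - Complex.I * (x:ℂ))⁻¹ := by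
      simp only [hf]
      rw [hterm]
      congr 2
      push_cast [hx]; ring
    have hz : ‖f k - 1‖ ≤ x ^ 2 := by
      have : f k - 1 = (Complex.exp (-(Complex.I * (x:ℂ))) - (1 - Complex.I * (x:ℂ))) *
          (1 - Complex.I * (x:ℂ))⁻¹ := by
        rw [hfk]; field_simp
      rw [this, norm_mul, norm_inv]
      calc ‖Complex.exp (-(Complex.I * (x:ℂ))) - (1 - Complex.I * (x:ℂ))‖ * ‖(1:ℂ) - Complex.I * (x:ℂ)‖⁻¹
          ≤ x^2 * 1 := by
            apply mul_le_mul hnum ?_ (by positivity) (sq_nonneg x)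
            rw [inv_le_one_iff₀]; right; exact hden
        _ = x^2 := mul_one _
    have hzhalf : ‖f k - 1‖ ≤ 1/2 := le_trans hz (by linarith)
    have := Complex.norm_log_one_add_half_le_self hzhalf
    rw [add_sub_cancel] at this
    calc ‖Complex.log (f k)‖ ≤ (3/2) * ‖f k - 1‖ := this
      _ ≤ (3/2) * (μ^2 * lam k ^2) := by
          have : x^2 = μ^2 * lam k ^ 2 := by rw [hx]; ring
          rw [← this]
          linarith
  exact Complex.multipliable_of_summable_log key

theorem multipliable_char_factors (n : ℕ) (A : Matrix (Fin n) (Fin n) ℂ)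
    (hA : A.IsHermitian) (lam : ℕ → ℝ) (hlam : Summable (fun k => lam k ^ 2)) :
    Multipliable (fun k : ℕ =>
      Complex.exp (-Complex.I * (lam k : ℂ) * A.trace) *
        ((1 - (Complex.I * (lam k : ℂ)) • A).det)⁻¹) := by
  set μ : Fin n → ℝ := hA.eigenvalues with hμ
  set U : Matrix (Fin n) (Fin n) ℂ := (hA.eigenvectorUnitary : Matrix (Fin n) (Fin n) ℂ) with hU
  have hUU : U * star U = 1 := by
    rw [hU]; exact Unitary.coe_mul_star_self _
  have hUU' : star U * U = 1 := by
    rw [hU]; exact Unitary.coe_star_mul_self _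
  have hspec : A = U * diagonal (RCLike.ofReal ∘ μ) * star U := hA.spectral_theorem
  have htr : A.trace = ∑ j, (μ j : ℂ) := by
    rw [hspec, trace_mul_cycle, hUU', one_mul, trace_diagonal]
    rfl
  have hdet : ∀ c : ℂ, (1 - c • A).det = ∏ j, (1 - c * (μ j : ℂ)) := by
    intro c
    have hconj : 1 - c • A = U * diagonal (fun j => 1 - c * (μ j : ℂ)) * star U := by
      have : diagonal (fun j => 1 - c * (μ j : ℂ))
          = 1 - c • diagonal (RCLike.ofReal ∘ μ) := by
        rw [← diagonal_one, ← diagonal_smul, ← diagonal_sub]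
        rfl
      rw [this, mul_sub, sub_mul, mul_one, hUU, mul_smul_comm, smul_mul_assoc, ← hspec]
    rw [hconj, det_mul_right_comm, hUU, one_mul, det_diagonal]
  have heq : ∀ k : ℕ,
      Complex.exp (-Complex.I * (lam k : ℂ) * A.trace) *
        ((1 - (Complex.I * (lam k : ℂ)) • A).det)⁻¹
      = ∏ j, (Complex.exp (-Complex.I * (lam k : ℂ) * (μ j : ℂ)) *
          (1 - Complex.I * (lam k : ℂ) * (μ j : ℂ))⁻¹) := by
    intro k
    rw [htr, hdet, Finset.mul_sum, Complex.exp_sum, ← Finset.prod_inv_distrib,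
      ← Finset.prod_mul_distrib]
  apply Multipliable.congr (f := fun k => ∏ j,
      (Complex.exp (-Complex.I * (lam k : ℂ) * (μ j : ℂ)) *
        (1 - Complex.I * (lam k : ℂ) * (μ j : ℂ))⁻¹))
  · exact multipliable_prod (fun j _ => aux_mult lam hlam (μ j))
  · exact fun k => (heq k).symm
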